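/- Let X, Y, Z be independent nonnegative random variables with X integrable in the sense that E[ln(1 + X/(Y + Z + σ²))] < ∞, and σ² > 0. Then E[log₂(1 + X/(Y + Z + σ²))] = (1/ln 2) ∫₀^∞ (e^{-sσ²}/s) · E[e^{-sY}] · E[e^{-sZ}] · (1 - E[e^{-sX}]) ds. -/

import Mathlib

open MeasureTheory ProbabilityTheory

open Set Real Function Filter

-- integral of exp(-(s*t)) over s in Ioi 0
lemma aux_exp_integral {t : ℝ} (ht : 0 < t) :
    ∫ s in Ioi (0:ℝ), Real.exp (-(s * t)) = 1 / t := by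
  have := integral_comp_mul_right_Ioi (fun u => Real.exp (-u)) 0 ht
  simp only [zero_mul] at this
  rw [this, integral_exp_neg_Ioi_zero, smul_eq_mul, mul_one, one_div]

lemma aux_exp_integrableOn {t : ℝ} (ht : 0 < t) :
    IntegrableOn (fun s => Real.exp (-(s * t))) (Ioi (0:ℝ)) := by
  have := exp_neg_integrableOn_Ioi 0 ht
  simpa [neg_mul, mul_comm] using this

-- interval integral of exp(-(s*t)) in t
lemma aux_interval (s : ℝ) (hs : s ≠ 0) (a b : ℝ) :
    ∫ t in a..b, Real.exp (-(s * t)) = (Real.exp (-(s * a)) - Real.exp (-(s * b))) / s := by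
  have h : ∀ t : ℝ, HasDerivAt (fun u => -(Real.exp (-(s * u)) / s)) (Real.exp (-(s * t))) t := by
    intro t
    have h1 : HasDerivAt (fun u : ℝ => -(s * u)) (-s) t := by
      simpa [Pi.neg_def] using ((hasDerivAt_id t).const_mul s).neg
    have h2 : HasDerivAt (fun u => -(Real.exp (-(s * u)) / s)) (-(Real.exp (-(s * t)) * -s / s)) t :=
      (h1.exp.div_const s).neg
    convert h2 using 1
    rw [mul_neg, neg_div, neg_neg, mul_div_cancel_right₀ _ hs]
  rw [intervalIntegral.integral_eq_sub_of_hasDerivAt (fun t _ => h t)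
    ((by fun_prop : Continuous fun t => Real.exp (-(s * t))).intervalIntegrable a b)]
  ring

lemma aux_integrable_prod {α β : Type*} [MeasurableSpace α] [MeasurableSpace β]
    (μ : Measure α) (ν : Measure β) [SFinite μ] [SFinite ν] {f : α → β → ℝ}
    (hf : Measurable (uncurry f)) (h0 : ∀ a b, 0 ≤ f a b)
    (hfin : ∫⁻ a, ∫⁻ b, ENNReal.ofReal (f a b) ∂ν ∂μ ≠ ⊤) :
    Integrable (uncurry f) (μ.prod ν) := by
  refine ⟨hf.aestronglyMeasurable, ?_⟩
  rw [hasFiniteIntegral_iff_norm]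
  have h1 : ∀ p : α × β, ENNReal.ofReal ‖uncurry f p‖ = ENNReal.ofReal (f p.1 p.2) := by
    intro p; rw [show uncurry f p = f p.1 p.2 from rfl, Real.norm_of_nonneg (h0 p.1 p.2)]
  calc ∫⁻ p, ENNReal.ofReal ‖uncurry f p‖ ∂μ.prod ν
      = ∫⁻ p : α × β, ENNReal.ofReal (f p.1 p.2) ∂μ.prod ν := lintegral_congr h1
    _ = ∫⁻ a, ∫⁻ b, ENNReal.ofReal (f a b) ∂ν ∂μ := by
        refine lintegral_prod _ ?_
        exact (hf.ennreal_ofReal).aemeasurable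
    _ < ⊤ := hfin.lt_top

lemma frullani_prod_integrable {a b : ℝ} (ha : 0 < a) (hab : a ≤ b) :
    Integrable (uncurry fun t s => Real.exp (-(s * t)))
      ((volume.restrict (Ioc a b)).prod (volume.restrict (Ioi 0))) := by
  apply aux_integrable_prod
  · exact (measurable_snd.mul measurable_fst).neg.exp
  · intro t s; positivity
  · have hb : ∀ t ∈ Ioc a b, ∫⁻ s in Ioi (0:ℝ), ENNReal.ofReal (Real.exp (-(s * t)))
        = ENNReal.ofReal (1 / t) := by
      intro t ht
      have ht0 : 0 < t := ha.trans_le ht.1.le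
      rw [← ofReal_integral_eq_lintegral_ofReal (aux_exp_integrableOn ht0)
        (Eventually.of_forall fun s => (Real.exp_pos _).le), aux_exp_integral ht0]
    rw [setLIntegral_congr_fun measurableSet_Ioc hb]
    have hbd : ∫⁻ t in Ioc a b, ENNReal.ofReal (1 / t)
        ≤ ∫⁻ _ in Ioc a b, ENNReal.ofReal (1 / a) := by
      apply setLIntegral_mono measurable_const
      intro t ht
      exact ENNReal.ofReal_le_ofReal (by
        apply one_div_le_one_div_of_le ha ht.1.le)
    refine ne_top_of_le_ne_top ?_ hbd
    rw [setLIntegral_const]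
    exact ENNReal.mul_ne_top ENNReal.ofReal_ne_top (by simp)

lemma frullani {a b : ℝ} (ha : 0 < a) (hab : a ≤ b) :
    ∫ s in Ioi (0:ℝ), (Real.exp (-(s * a)) - Real.exp (-(s * b))) / s = Real.log (b / a) := by
  have hint := frullani_prod_integrable ha hab
  have hswap := integral_integral_swap hint
  have hL : ∫ t in Ioc a b, ∫ s in Ioi (0:ℝ), Real.exp (-(s * t)) = Real.log (b / a) := by
    rw [setIntegral_congr_fun measurableSet_Ioc
      (fun t ht => aux_exp_integral (ha.trans_le ht.1.le))]
    rw [← intervalIntegral.integral_of_le hab]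
    exact integral_one_div_of_pos ha (ha.trans_le hab)
  have hR : ∀ s ∈ Ioi (0:ℝ), ∫ t in Ioc a b, Real.exp (-(s * t))
      = (Real.exp (-(s * a)) - Real.exp (-(s * b))) / s := by
    intro s hs
    rw [← intervalIntegral.integral_of_le hab]
    exact aux_interval s (ne_of_gt hs) a b
  rw [← setIntegral_congr_fun measurableSet_Ioi hR, ← hswap, hL]

lemma frullani_integrableOn {a b : ℝ} (ha : 0 < a) (hab : a ≤ b) :
    IntegrableOn (fun s => (Real.exp (-(s * a)) - Real.exp (-(s * b))) / s) (Ioi (0:ℝ)) := by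
  have hint := frullani_prod_integrable ha hab
  have h2 := hint.integral_prod_right
  refine h2.congr ?_
  filter_upwards [ae_restrict_mem measurableSet_Ioi] with s hs
  rw [← intervalIntegral.integral_of_le hab]
  exact aux_interval s (ne_of_gt hs) a b

lemma aux_nonneg {a c : ℝ} (ha : 0 < a) (hc : 0 ≤ c) (s : ℝ) :
    0 ≤ (Real.exp (-(s * a)) - Real.exp (-(s * (a + c)))) / s := by
  rcases lt_trichotomy s 0 with hs | hs | hs
  · refine div_nonneg_iff.mpr (Or.inr ⟨?_, hs.le⟩)
    have : -(s * a) ≤ -(s * (a + c)) := by nlinarith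
    linarith [Real.exp_le_exp.mpr this]
  · simp [hs]
  · apply div_nonneg _ hs.le
    have : -(s * (a + c)) ≤ -(s * a) := by nlinarith
    linarith [Real.exp_le_exp.mpr this]

/-- Let `X, Y, Z` be independent nonnegative random variables with
`E[ln(1 + X/(Y+Z+σ²))] < ∞` (i.e. the log-expression is integrable) and `σ² > 0`.  Then
`E[log₂(1 + X/(Y+Z+σ²))]
  = (1/ln 2) ∫₀^∞ (e^{-sσ²}/s) E[e^{-sY}] E[e^{-sZ}] (1 - E[e^{-sX}]) ds`. -/
theorem ergodic_capacity_laplace_form {Ω : Type*} [MeasurableSpace Ω] (P : Measure Ω)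
    [IsProbabilityMeasure P] (X Y Z : Ω → ℝ) (σ2 : ℝ) (hσ : 0 < σ2)
    (hmX : Measurable X) (hmY : Measurable Y) (hmZ : Measurable Z)
    (hX : ∀ ω, 0 ≤ X ω) (hY : ∀ ω, 0 ≤ Y ω) (hZ : ∀ ω, 0 ≤ Z ω)
    (hindep : iIndepFun ![X, Y, Z] P)
    (hint : Integrable (fun ω => Real.log (1 + X ω / (Y ω + Z ω + σ2))) P) :
    ∫ ω, Real.logb 2 (1 + X ω / (Y ω + Z ω + σ2)) ∂P
      = (1 / Real.log 2) *
        ∫ s in Set.Ioi (0 : ℝ),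
          (Real.exp (-(s * σ2)) / s) * (∫ ω, Real.exp (-(s * Y ω)) ∂P) *
            (∫ ω, Real.exp (-(s * Z ω)) ∂P) * (1 - ∫ ω, Real.exp (-(s * X ω)) ∂P) := by
  set D : Ω → ℝ := fun ω => Y ω + Z ω + σ2 with hD_def
  have hD : ∀ ω, 0 < D ω := fun ω => by
    have := hY ω; have := hZ ω; simp only [hD_def]; linarith
  have hmD : Measurable D := (hmY.add hmZ).add_const σ2
  set g : Ω → ℝ → ℝ :=
    fun ω s => (Real.exp (-(s * D ω)) - Real.exp (-(s * (D ω + X ω)))) / s with hg_def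
  -- pointwise Frullani
  have hfru : ∀ ω, ∫ s in Set.Ioi (0:ℝ), g ω s = Real.log (1 + X ω / D ω) := by
    intro ω
    have := frullani (hD ω) (le_add_of_nonneg_right (hX ω))
    rw [hg_def, this]
    congr 1
    rw [add_div, div_self (hD ω).ne']
  have hlog_nonneg : ∀ ω, 0 ≤ Real.log (1 + X ω / D ω) := fun ω =>
    Real.log_nonneg (by
      have : 0 ≤ X ω / D ω := div_nonneg (hX ω) (hD ω).le
      linarith)
  -- product integrability
  have hmg : Measurable (Function.uncurry fun ω s => g ω s) := by
    simp only [hg_def, Function.uncurry]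
    exact (((measurable_snd.mul (hmD.comp measurable_fst)).neg.exp).sub
      ((measurable_snd.mul ((hmD.comp measurable_fst).add
        (hmX.comp measurable_fst))).neg.exp)).div measurable_snd
  have hprod : Integrable (Function.uncurry fun ω s => g ω s)
      (P.prod (volume.restrict (Set.Ioi 0))) := by
    apply aux_integrable_prod _ _ hmg (fun ω s => aux_nonneg (hD ω) (hX ω) s)
    have hinner : ∀ ω, ∫⁻ s in Set.Ioi (0:ℝ), ENNReal.ofReal (g ω s)
        = ENNReal.ofReal (Real.log (1 + X ω / D ω)) := by
      intro ω
      rw [← ofReal_integral_eq_lintegral_ofReal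
        (frullani_integrableOn (hD ω) (le_add_of_nonneg_right (hX ω)))
        (Eventually.of_forall fun s => aux_nonneg (hD ω) (hX ω) s), hfru ω]
    rw [lintegral_congr hinner]
    have := hint.2
    rw [hasFiniteIntegral_iff_norm] at this
    refine ne_top_of_le_ne_top this.ne (lintegral_mono fun ω => ?_)
    exact ENNReal.ofReal_le_ofReal (le_abs_self _)
  have hswap := integral_integral_swap hprod
  -- inner integral over ω for fixed s > 0
  have hmul : ∀ s ∈ Set.Ioi (0:ℝ), ∫ ω, g ω s ∂P
      = (Real.exp (-(s * σ2)) / s) * (∫ ω, Real.exp (-(s * Y ω)) ∂P) *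
          (∫ ω, Real.exp (-(s * Z ω)) ∂P) * (1 - ∫ ω, Real.exp (-(s * X ω)) ∂P) := by
    intro s hs
    set φ : ℝ → ℝ := fun x => Real.exp (-(s * x)) with hφ_def
    have hmφ : Measurable φ := (measurable_const.mul measurable_id).neg.exp
    have hbdd : ∀ W : Ω → ℝ, Measurable W → (∀ ω, 0 ≤ W ω) →
        Integrable (fun ω => φ (W ω)) P := by
      intro W hmW hW0
      refine Integrable.mono' (integrable_const 1) (hmφ.comp hmW).aestronglyMeasurable
        (Eventually.of_forall fun ω => ?_)
      rw [Real.norm_of_nonneg (Real.exp_pos _).le]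
      exact Real.exp_le_one_iff.mpr (by nlinarith [hW0 ω, hs.out])
    have hiX := hbdd X hmX hX
    have hiY := hbdd Y hmY hY
    have hiZ := hbdd Z hmZ hZ
    have hiYZX : Integrable (fun ω => φ (Y ω) * φ (Z ω) * φ (X ω)) P := by
      refine Integrable.mono' (integrable_const 1)
        ((((hmφ.comp hmY).mul (hmφ.comp hmZ)).mul (hmφ.comp hmX)).aestronglyMeasurable)
        (Eventually.of_forall fun ω => ?_)
      have h1 : φ (Y ω) ≤ 1 := Real.exp_le_one_iff.mpr (by nlinarith [hY ω, hs.out])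
      have h2 : φ (Z ω) ≤ 1 := Real.exp_le_one_iff.mpr (by nlinarith [hZ ω, hs.out])
      have h3 : φ (X ω) ≤ 1 := Real.exp_le_one_iff.mpr (by nlinarith [hX ω, hs.out])
      rw [Real.norm_of_nonneg (by positivity)]
      exact mul_le_one₀ (mul_le_one₀ h1 (Real.exp_pos _).le h2) (by positivity) h3
    have hiYZ : Integrable (fun ω => φ (Y ω) * φ (Z ω)) P := by
      refine Integrable.mono' (integrable_const 1)
        (((hmφ.comp hmY).mul (hmφ.comp hmZ)).aestronglyMeasurable)
        (Eventually.of_forall fun ω => ?_)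
      have h1 : φ (Y ω) ≤ 1 := Real.exp_le_one_iff.mpr (by nlinarith [hY ω, hs.out])
      have h2 : φ (Z ω) ≤ 1 := Real.exp_le_one_iff.mpr (by nlinarith [hZ ω, hs.out])
      rw [Real.norm_of_nonneg (by positivity)]
      nlinarith [Real.exp_pos (-(s * Y ω)), Real.exp_pos (-(s * Z ω))]
    have hmeas3 : ∀ i, Measurable (![X, Y, Z] i) := by
      intro i; fin_cases i <;> simpa using by assumption
    have hYZ : IndepFun Y Z P := by
      have := hindep.indepFun (show (1 : Fin 3) ≠ 2 by decide)
      simpa using this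
    have hEYZ : ∫ ω, φ (Y ω) * φ (Z ω) ∂P
        = (∫ ω, φ (Y ω) ∂P) * ∫ ω, φ (Z ω) ∂P :=
      (hYZ.comp hmφ hmφ).integral_mul_eq_mul_integral hiY.aestronglyMeasurable hiZ.aestronglyMeasurable
    have hYZX : IndepFun (fun ω => (Y ω, Z ω)) X P := by
      have := hindep.indepFun_prodMk hmeas3 1 2 0 (by decide) (by decide)
      simpa using this
    have hP : IndepFun (fun ω => φ (Y ω) * φ (Z ω)) (fun ω => φ (X ω)) P :=
      hYZX.comp ((hmφ.comp measurable_fst).mul (hmφ.comp measurable_snd)) hmφ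
    have hEall : ∫ ω, φ (Y ω) * φ (Z ω) * φ (X ω) ∂P
        = ((∫ ω, φ (Y ω) ∂P) * ∫ ω, φ (Z ω) ∂P) * ∫ ω, φ (X ω) ∂P := by
      rw [← hEYZ]
      exact hP.integral_mul_eq_mul_integral hiYZ.aestronglyMeasurable hiX.aestronglyMeasurable
    have hrw : ∀ ω, g ω s = (Real.exp (-(s * σ2)) / s) *
        (φ (Y ω) * φ (Z ω) - φ (Y ω) * φ (Z ω) * φ (X ω)) := by
      intro ω
      simp only [hg_def, hφ_def, hD_def]
      rw [show -(s * (Y ω + Z ω + σ2)) = -(s * σ2) + (-(s * Y ω) + -(s * Z ω)) by ring,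
        show -(s * (Y ω + Z ω + σ2 + X ω))
          = -(s * σ2) + (-(s * Y ω) + -(s * Z ω) + -(s * X ω)) by ring,
        ]
      simp only [Real.exp_add]
      ring
    calc ∫ ω, g ω s ∂P
        = ∫ ω, (Real.exp (-(s * σ2)) / s) *
            (φ (Y ω) * φ (Z ω) - φ (Y ω) * φ (Z ω) * φ (X ω)) ∂P := by
          exact integral_congr_ae (Eventually.of_forall hrw)
      _ = (Real.exp (-(s * σ2)) / s) *
            ((∫ ω, φ (Y ω) * φ (Z ω) ∂P) - ∫ ω, φ (Y ω) * φ (Z ω) * φ (X ω) ∂P) := by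
          rw [integral_const_mul, integral_sub hiYZ hiYZX]
      _ = _ := by rw [hEYZ, hEall]; ring
  -- assemble
  have hlhs : ∫ ω, (∫ s in Set.Ioi (0:ℝ), g ω s) ∂P
      = ∫ ω, Real.log (1 + X ω / (Y ω + Z ω + σ2)) ∂P :=
    integral_congr_ae (Eventually.of_forall fun ω => hfru ω)
  simp only [Real.logb]
  have hfinal : ∫ s in Set.Ioi (0:ℝ), ∫ ω, g ω s ∂P
      = ∫ s in Set.Ioi (0:ℝ),
          (Real.exp (-(s * σ2)) / s) * (∫ ω, Real.exp (-(s * Y ω)) ∂P) *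
            (∫ ω, Real.exp (-(s * Z ω)) ∂P) * (1 - ∫ ω, Real.exp (-(s * X ω)) ∂P) :=
    setIntegral_congr_fun measurableSet_Ioi (fun s hs => hmul s hs)
  rw [integral_div, ← hlhs, hswap, hfinal]
  ring
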